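/- Let 𝓜 be a compact set of real symmetric m×m matrices and let Ω_𝓜(X) = sup_{M ∈ 𝓜} trace(X M Xᵀ). Fix X ∈ ℝ^{n×m}, and suppose M₀ ∈ 𝓜 is positive semidefinite and attains the supremum, i.e., trace(X M₀ Xᵀ) = Ω_𝓜(X). Then 2XM₀ is a subgradient of Ω_𝓜 at X: for all Y ∈ ℝ^{n×m}, Ω_𝓜(Y) ≥ Ω_𝓜(X) + ⟨2XM₀, Y − X⟩, where ⟨A, B⟩ = trace(AᵀB). -/

import Mathlib

open Matrix

lemma psd_trace_nonneg {m : ℕ} {A : Matrix (Fin m) (Fin m) ℝ}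
    (hA : A.PosSemidef) : 0 ≤ A.trace := by
  rw [Matrix.trace]
  apply Finset.sum_nonneg
  intro i _
  have := hA.dotProduct_mulVec_nonneg (Pi.single i 1)
  simpa [dotProduct, Matrix.mulVec, Pi.single_apply, Finset.sum_ite_eq,
    Matrix.diag] using this

/-- If `M₀ ∈ 𝓜` is positive semidefinite and attains the supremum defining the VGF at
`X`, then `2 X M₀` is a subgradient of the VGF at `X`. -/
theorem vgf_subgradient {n m : ℕ}
    (𝓜 : Set (Matrix (Fin m) (Fin m) ℝ))
    (hcpt : IsCompact 𝓜) (hsym : ∀ M ∈ 𝓜, M.IsSymm)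
    (Ω : Matrix (Fin n) (Fin m) ℝ → ℝ)
    (hΩ : ∀ X, Ω X = ⨆ M ∈ 𝓜, (X * M * Xᵀ).trace)
    (X : Matrix (Fin n) (Fin m) ℝ) (M₀ : Matrix (Fin m) (Fin m) ℝ)
    (hM₀ : M₀ ∈ 𝓜) (hpsd : M₀.PosSemidef)
    (hatt : (X * M₀ * Xᵀ).trace = Ω X) :
    ∀ Y : Matrix (Fin n) (Fin m) ℝ,
      Ω X + (((2 : ℝ) • (X * M₀))ᵀ * (Y - X)).trace ≤ Ω Y := by
  intro Y
  -- first: Ω Y ≥ trace (Y M₀ Yᵀ)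
  have hcont : Continuous (fun M : Matrix (Fin m) (Fin m) ℝ => (Y * M * Yᵀ).trace) := by
    exact (continuous_const.matrix_mul continuous_id).matrix_mul continuous_const |>.matrix_trace
  have hbdd : BddAbove ((fun M : Matrix (Fin m) (Fin m) ℝ => (Y * M * Yᵀ).trace) '' 𝓜) :=
    (hcpt.image hcont).bddAbove
  obtain ⟨B, hB⟩ := hbdd
  have hC : ∀ M : Matrix (Fin m) (Fin m) ℝ,
      (⨆ _ : M ∈ 𝓜, (Y * M * Yᵀ).trace) ≤ max B 0 := by
    intro M
    by_cases h : M ∈ 𝓜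
    · haveI : Nonempty (M ∈ 𝓜) := ⟨h⟩
      exact ciSup_le fun _ => le_max_of_le_left (hB (Set.mem_image_of_mem _ h))
    · haveI : IsEmpty (M ∈ 𝓜) := ⟨h⟩
      simp [Real.iSup_of_isEmpty]
  have hle : (Y * M₀ * Yᵀ).trace ≤ Ω Y := by
    rw [hΩ Y]
    refine le_trans ?_ (le_ciSup ⟨max B 0, Set.forall_mem_range.mpr hC⟩ M₀)
    exact le_ciSup (f := fun _ : M₀ ∈ 𝓜 => (Y * M₀ * Yᵀ).trace)
      (Set.finite_range _).bddAbove hM₀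
  refine le_trans ?_ hle
  -- expand trace (Y M₀ Yᵀ)
  have hsymM : M₀ᵀ = M₀ := (hsym M₀ hM₀)
  have key : (Y * M₀ * Yᵀ).trace
      = (X * M₀ * Xᵀ).trace + (((2 : ℝ) • (X * M₀))ᵀ * (Y - X)).trace
        + ((Y - X) * M₀ * (Y - X)ᵀ).trace := by
    have hY : Y = X + (Y - X) := by abel
    have hcross : (X * M₀ * (Y - X)ᵀ).trace = ((Y - X) * M₀ * Xᵀ).trace := by
      rw [← Matrix.trace_transpose (X * M₀ * (Y - X)ᵀ)]
      simp [Matrix.transpose_mul, hsymM, Matrix.mul_assoc]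
    have hcross2 : (((X * M₀))ᵀ * (Y - X)).trace = ((Y - X) * M₀ * Xᵀ).trace := by
      rw [Matrix.transpose_mul, hsymM, Matrix.trace_mul_comm, ← Matrix.mul_assoc]
    calc (Y * M₀ * Yᵀ).trace
        = ((X + (Y - X)) * M₀ * (X + (Y - X))ᵀ).trace := by rw [← hY]
      _ = (X * M₀ * Xᵀ).trace + (X * M₀ * (Y - X)ᵀ).trace
          + ((Y - X) * M₀ * Xᵀ).trace + ((Y - X) * M₀ * (Y - X)ᵀ).trace := by
          simp only [Matrix.transpose_add, Matrix.add_mul, Matrix.mul_add, Matrix.trace_add]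
          ring
      _ = (X * M₀ * Xᵀ).trace + (((2 : ℝ) • (X * M₀))ᵀ * (Y - X)).trace
          + ((Y - X) * M₀ * (Y - X)ᵀ).trace := by
          rw [hcross, Matrix.transpose_smul, Matrix.smul_mul, Matrix.trace_smul, hcross2,
            smul_eq_mul]
          ring
  rw [key, hatt]
  have hpsd2 : ((Y - X) * M₀ * (Y - X)ᵀ).PosSemidef := by
    have := hpsd.mul_mul_conjTranspose_same (Y - X)
    simpa using this
  linarith [psd_trace_nonneg hpsd2]
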